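/- The bilinear bracket defined on the free complex vector space with basis {x_{(a,i)} : a ∈ ℤ, i ∈ ℕ} by [x_{(a,i)}, x_{(b,j)}] = ((b−1)i − (a−1)j)·x_{(a+b, i+j−1)} is alternating and satisfies the Jacobi identity, and hence makes this vector space into a Lie algebra over ℂ (the Lie algebra ℬ of Block type). -/

import Mathlib

noncomputable section

/-- Index set for the basis of the Block type Lie algebra. -/
abbrev BlockIndex : Type := ℤ × ℕ

/-- The underlying vector space of the Block type Lie algebra `ℬ`:
the free complex vector space on `BlockIndex`. -/
abbrev BlockAlg : Type := BlockIndex →₀ ℂ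

/-- The basis vector `x_{(a,i)}`. -/
def xv (p : BlockIndex) : BlockAlg := Finsupp.single p 1

/-- Structure constant `(b-1)i - (a-1)j` for `[x_{(a,i)}, x_{(b,j)}]`. -/
def structCoeff (p q : BlockIndex) : ℂ :=
  (((q.1 - 1) * p.2 - (p.1 - 1) * q.2 : ℤ) : ℂ)

/-- The index `(a+b, i+j-1)` of the target basis vector. -/
def targetIdx (p q : BlockIndex) : BlockIndex := (p.1 + q.1, p.2 + q.2 - 1)

/-- The bracket on `ℬ`, defined bilinearly from
`[x_{(a,i)}, x_{(b,j)}] = ((b-1)i - (a-1)j)·x_{(a+b,i+j-1)}`. -/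
def blockBracket (u v : BlockAlg) : BlockAlg :=
  u.sum fun p c => v.sum fun q d => (c * d * structCoeff p q) • xv (targetIdx p q)


lemma bb_xv (p q : BlockIndex) :
    blockBracket (xv p) (xv q) = structCoeff p q • xv (targetIdx p q) := by
  rw [blockBracket]
  simp only [xv]
  rw [Finsupp.sum_single_index (by simp), Finsupp.sum_single_index (by simp), one_mul, one_mul]

lemma bb_add_left (u v w : BlockAlg) :
    blockBracket (u + v) w = blockBracket u w + blockBracket v w := by
  unfold blockBracket
  rw [Finsupp.sum_add_index'] <;> intros <;> simp [add_mul, add_smul, Finsupp.sum_add]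

lemma bb_add_right (u v w : BlockAlg) :
    blockBracket u (v + w) = blockBracket u v + blockBracket u w := by
  unfold blockBracket
  rw [← Finsupp.sum_add]
  congr 1; ext p c
  rw [Finsupp.sum_add_index'] <;> intros <;> ring_nf <;> simp [add_mul, mul_add, add_smul]

lemma bb_smul_left (c : ℂ) (u v : BlockAlg) :
    blockBracket (c • u) v = c • blockBracket u v := by
  unfold blockBracket
  rw [Finsupp.sum_smul_index, Finsupp.smul_sum] <;>
    simp [Finsupp.smul_sum, mul_assoc, mul_smul]

lemma bb_smul_right (c : ℂ) (u v : BlockAlg) :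
    blockBracket u (c • v) = c • blockBracket u v := by
  unfold blockBracket
  rw [Finsupp.smul_sum]
  congr 1; ext p d
  rw [Finsupp.sum_smul_index, Finsupp.smul_sum] <;>
    simp [mul_smul, mul_assoc, mul_left_comm]

lemma bb_zero_left (v : BlockAlg) : blockBracket 0 v = 0 := by
  simpa using bb_smul_left 0 0 v

lemma bb_zero_right (v : BlockAlg) : blockBracket v 0 = 0 := by
  simpa using bb_smul_right 0 v 0

lemma structCoeff_swap (p q : BlockIndex) : structCoeff q p = - structCoeff p q := by
  unfold structCoeff; push_cast; ring

lemma targetIdx_swap (p q : BlockIndex) : targetIdx q p = targetIdx p q := by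
  unfold targetIdx
  refine Prod.ext ?_ ?_ <;> simp <;> omega

lemma bb_skew (u v : BlockAlg) : blockBracket v u = - blockBracket u v := by
  have h : blockBracket v u + blockBracket u v = 0 := by
    unfold blockBracket
    rw [Finsupp.sum_comm v u, ← Finsupp.sum_add]
    refine Finset.sum_eq_zero fun p _ => ?_
    dsimp only
    rw [← Finsupp.sum_add]
    refine Finset.sum_eq_zero fun q _ => ?_
    dsimp only
    rw [targetIdx_swap p q, structCoeff_swap p q, ← add_smul]
    convert zero_smul ℂ (xv (targetIdx p q)) using 2
    ring
  exact eq_neg_of_add_eq_zero_left h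

lemma bb_self (u : BlockAlg) : blockBracket u u = 0 := by
  have h := bb_skew u u
  have h2 : (2:ℂ) • blockBracket u u = 0 := by
    rw [two_smul]; nth_rewrite 1 [h]; simp
  simpa using (smul_eq_zero.mp h2).resolve_left (by norm_num)

lemma term_eq (p q r : BlockIndex) :
    (structCoeff q r * structCoeff p (targetIdx q r)) • xv (targetIdx p (targetIdx q r))
      = (((((r.1-1)*q.2-(q.1-1)*r.2) * ((q.1+r.1-1)*p.2-(p.1-1)*(q.2+r.2-1)) : ℤ)) : ℂ)
          • xv (p.1+q.1+r.1, p.2+q.2+r.2-2) := by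
  obtain ⟨a,i⟩ := p; obtain ⟨b,j⟩ := q; obtain ⟨c,k⟩ := r
  rcases Nat.eq_zero_or_pos (j+k) with h|h
  · obtain ⟨hj, hk⟩ := Nat.add_eq_zero.mp h
    subst hj; subst hk
    simp [structCoeff, targetIdx]
  · have hidx : targetIdx (a,i) (targetIdx (b,j) (c,k)) = (a+b+c, i+j+k-2) := by
      refine Prod.ext ?_ ?_ <;> simp [targetIdx] <;> [ring; omega]
    rw [hidx]
    congr 1
    have hc : ((j+k-1 : ℕ) : ℤ) = (j:ℤ)+k-1 := by omega
    simp only [structCoeff, targetIdx]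
    push_cast [hc]
    ring

lemma jacobi_xv (p q r : BlockIndex) :
    blockBracket (xv p) (blockBracket (xv q) (xv r)) +
      blockBracket (xv q) (blockBracket (xv r) (xv p)) +
      blockBracket (xv r) (blockBracket (xv p) (xv q)) = 0 := by
  rw [bb_xv, bb_xv, bb_xv, bb_smul_right, bb_smul_right, bb_smul_right,
    bb_xv, bb_xv, bb_xv, smul_smul, smul_smul, smul_smul]
  rw [term_eq p q r, term_eq q r p, term_eq r p q]
  have e2 : ((q.1+r.1+p.1, q.2+r.2+p.2-2) : BlockIndex) = (p.1+q.1+r.1, p.2+q.2+r.2-2) := by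
    refine Prod.ext ?_ ?_ <;> simp <;> [ring; omega]
  have e3 : ((r.1+p.1+q.1, r.2+p.2+q.2-2) : BlockIndex) = (p.1+q.1+r.1, p.2+q.2+r.2-2) := by
    refine Prod.ext ?_ ?_ <;> simp <;> [ring; omega]
  rw [e2, e3, ← add_smul, ← add_smul]
  convert zero_smul ℂ (xv (p.1+q.1+r.1, p.2+q.2+r.2-2)) using 2
  push_cast
  ring

lemma single_eq_smul_xv (a : BlockIndex) (b : ℂ) :
    (Finsupp.single a b : BlockAlg) = b • xv a := by
  simp [xv, Finsupp.smul_single]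

lemma jacobi_xv2 (p q : BlockIndex) (w : BlockAlg) :
    blockBracket (xv p) (blockBracket (xv q) w) +
      blockBracket (xv q) (blockBracket w (xv p)) +
      blockBracket w (blockBracket (xv p) (xv q)) = 0 := by
  induction w using Finsupp.induction_linear with
  | zero => simp [bb_zero_left, bb_zero_right]
  | add f g hf hg =>
    rw [bb_add_right, bb_add_right, bb_add_left, bb_add_right, bb_add_left]
    have h : (blockBracket (xv p) (blockBracket (xv q) f) +
        blockBracket (xv q) (blockBracket f (xv p)) +
        blockBracket f (blockBracket (xv p) (xv q))) +
        (blockBracket (xv p) (blockBracket (xv q) g) +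
        blockBracket (xv q) (blockBracket g (xv p)) +
        blockBracket g (blockBracket (xv p) (xv q))) = 0 := by
      rw [hf, hg, add_zero]
    rw [← h]; abel
  | single a b =>
    rw [single_eq_smul_xv, bb_smul_right, bb_smul_right, bb_smul_left, bb_smul_right,
      bb_smul_left, ← smul_add, ← smul_add, jacobi_xv, smul_zero]

lemma jacobi_xv1 (p : BlockIndex) (v w : BlockAlg) :
    blockBracket (xv p) (blockBracket v w) +
      blockBracket v (blockBracket w (xv p)) +
      blockBracket w (blockBracket (xv p) v) = 0 := by
  induction v using Finsupp.induction_linear with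
  | zero => simp [bb_zero_left, bb_zero_right]
  | add f g hf hg =>
    rw [bb_add_left, bb_add_right, bb_add_left, bb_add_right, bb_add_right]
    have h : (blockBracket (xv p) (blockBracket f w) +
        blockBracket f (blockBracket w (xv p)) +
        blockBracket w (blockBracket (xv p) f)) +
        (blockBracket (xv p) (blockBracket g w) +
        blockBracket g (blockBracket w (xv p)) +
        blockBracket w (blockBracket (xv p) g)) = 0 := by
      rw [hf, hg, add_zero]
    rw [← h]; abel
  | single a b =>
    rw [single_eq_smul_xv, bb_smul_left, bb_smul_right, bb_smul_left, bb_smul_right,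
      bb_smul_right, ← smul_add, ← smul_add, jacobi_xv2, smul_zero]

lemma jacobi (u v w : BlockAlg) :
    blockBracket u (blockBracket v w) + blockBracket v (blockBracket w u) +
      blockBracket w (blockBracket u v) = 0 := by
  induction u using Finsupp.induction_linear with
  | zero => simp [bb_zero_left, bb_zero_right]
  | add f g hf hg =>
    rw [bb_add_left, bb_add_right, bb_add_right, bb_add_left, bb_add_right]
    have h : (blockBracket f (blockBracket v w) +
        blockBracket v (blockBracket w f) +
        blockBracket w (blockBracket f v)) +
        (blockBracket g (blockBracket v w) +
        blockBracket v (blockBracket w g) +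
        blockBracket w (blockBracket g v)) = 0 := by
      rw [hf, hg, add_zero]
    rw [← h]; abel
  | single a b =>
    rw [single_eq_smul_xv, bb_smul_left, bb_smul_right, bb_smul_right, bb_smul_left,
      bb_smul_right, ← smul_add, ← smul_add, jacobi_xv1, smul_zero]

/-- The bracket `[x_{(a,i)}, x_{(b,j)}] = ((b-1)i - (a-1)j)·x_{(a+b,i+j-1)}`, extended
bilinearly to the free complex vector space on `{x_{(a,i)} : a ∈ ℤ, i ∈ ℕ}`, takes the
stated values on basis vectors, is bilinear, alternating, and satisfies the Jacobi
identity; hence it makes this vector space into a complex Lie algebra. -/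
theorem blockBracket_isLieBracket :
    (∀ p q : BlockIndex, blockBracket (xv p) (xv q) = structCoeff p q • xv (targetIdx p q)) ∧
    (∀ u v w : BlockAlg, blockBracket (u + v) w = blockBracket u w + blockBracket v w) ∧
    (∀ u v w : BlockAlg, blockBracket u (v + w) = blockBracket u v + blockBracket u w) ∧
    (∀ (c : ℂ) (u v : BlockAlg), blockBracket (c • u) v = c • blockBracket u v) ∧
    (∀ (c : ℂ) (u v : BlockAlg), blockBracket u (c • v) = c • blockBracket u v) ∧
    (∀ u : BlockAlg, blockBracket u u = 0) ∧
    (∀ u v w : BlockAlg,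
      blockBracket u (blockBracket v w) + blockBracket v (blockBracket w u) +
        blockBracket w (blockBracket u v) = 0) := by
  exact ⟨bb_xv, bb_add_left, bb_add_right, bb_smul_left, bb_smul_right, bb_self, jacobi⟩

end
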